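/- Let m, n, r ∈ ℕ with m ≥ n, let (a_k) be a sequence of complex numbers, and let t ∈ ℝ be such that t ≠ 2lπ/r for every integer l. Then ∑_{k=n}^{m} a_k cos(kt) = ∑_{k=n}^{m} (a_k − a_{k+r}) D°_{k,r}(t) − ∑_{k=m+1}^{m+r} a_k D°_{k,−r}(t) + ∑_{k=n}^{n+r−1} a_k D°_{k,−r}(t). -/

import Mathlib

open Real Finset

noncomputable section

/-- The kernel `D°_{k,ρ}(t) = sin((2k+ρ)t/2) / (2 sin(ρt/2))`. -/
def Dker (k : ℕ) (ρ : ℤ) (t : ℝ) : ℝ :=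
  Real.sin ((2 * (k : ℝ) + (ρ : ℝ)) * t / 2) / (2 * Real.sin ((ρ : ℝ) * t / 2))

lemma sin_ne_zero_of_ht (r : ℕ) (hr : 1 ≤ r) (t : ℝ)
    (ht : ∀ l : ℤ, t ≠ 2 * (l : ℝ) * π / (r : ℝ)) :
    Real.sin ((r : ℝ) * t / 2) ≠ 0 := by
  intro h
  rcases Real.sin_eq_zero_iff.1 h with ⟨l, hl⟩
  have hr0 : (r : ℝ) ≠ 0 := by positivity
  exact ht l (by field_simp at hl ⊢; linarith)

lemma cos_eq_Dker (k r : ℕ) (t : ℝ) (hs : Real.sin ((r : ℝ) * t / 2) ≠ 0) :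
    Real.cos ((k : ℝ) * t) = Dker k (r : ℤ) t + Dker k (-(r : ℤ)) t := by
  unfold Dker
  push_cast
  rw [show (2 * (k : ℝ) + r) * t / 2 = k * t + r * t / 2 by ring,
    show (2 * (k : ℝ) + -r) * t / 2 = k * t - r * t / 2 by ring,
    show -(r : ℝ) * t / 2 = -(r * t / 2) by ring,
    Real.sin_add, Real.sin_sub, Real.sin_neg]
  field_simp
  ring_nf
  rw [show t * (r : ℝ) * (1 / 2) = r * t / 2 by ring, mul_assoc (cos _), mul_inv_cancel₀ hs]
  ring

lemma Dker_r_eq (k r : ℕ) (t : ℝ) :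
    Dker k (r : ℤ) t = -Dker (k + r) (-(r : ℤ)) t := by
  unfold Dker
  push_cast
  rw [show (2 * ((k : ℝ) + r) + -r) * t / 2 = (2 * k + r) * t / 2 by ring,
    show -(r : ℝ) * t / 2 = -(r * t / 2) by ring, Real.sin_neg]
  ring

/-- **Lemma 3, cosine part.** Summation-by-parts identity with `r`-differences. -/
theorem lemma_three_cos (m n r : ℕ) (hr : 1 ≤ r) (hmn : n ≤ m) (a : ℕ → ℂ) (t : ℝ)
    (ht : ∀ l : ℤ, t ≠ 2 * (l : ℝ) * π / (r : ℝ)) :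
    ∑ k ∈ Finset.Icc n m, a k * ((Real.cos ((k : ℝ) * t) : ℝ) : ℂ)
      = ∑ k ∈ Finset.Icc n m, (a k - a (k + r)) * ((Dker k (r : ℤ) t : ℝ) : ℂ)
        - ∑ k ∈ Finset.Icc (m + 1) (m + r), a k * ((Dker k (-(r : ℤ)) t : ℝ) : ℂ)
        + ∑ k ∈ Finset.Icc n (n + r - 1), a k * ((Dker k (-(r : ℤ)) t : ℝ) : ℂ) := by
  have hs := sin_ne_zero_of_ht r hr t ht
  set f : ℕ → ℂ := fun k => a k * ((Dker k (-(r : ℤ)) t : ℝ) : ℂ) with hf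
  have hIcc1 : Finset.Icc n m = Finset.Ico n (m + 1) := by
    rw [Finset.Ico_add_one_right_eq_Icc]
  have hIcc2 : Finset.Icc (m + 1) (m + r) = Finset.Ico (m + 1) (m + r + 1) := by
    rw [Finset.Ico_add_one_right_eq_Icc]
  have hIcc3 : Finset.Icc n (n + r - 1) = Finset.Ico n (n + r) := by
    rw [← Finset.Ico_add_one_right_eq_Icc]
    congr 1
    omega
  rw [hIcc1, hIcc2, hIcc3]
  have key : ∀ k ∈ Finset.Ico n (m + 1),
      a k * ((Real.cos ((k : ℝ) * t) : ℝ) : ℂ)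
        = (a k - a (k + r)) * ((Dker k (r : ℤ) t : ℝ) : ℂ) + f k - f (k + r) := by
    intro k _
    have h1 := cos_eq_Dker k r t hs
    have h2 := Dker_r_eq k r t
    simp only [hf, h1, h2]
    push_cast
    ring
  rw [Finset.sum_congr rfl key]
  rw [Finset.sum_sub_distrib, Finset.sum_add_distrib]
  have hshift : ∑ k ∈ Finset.Ico n (m + 1), f (k + r)
      = ∑ k ∈ Finset.Ico (n + r) (m + r + 1), f k := by
    rw [show m + r + 1 = m + 1 + r from by omega]
    exact Finset.sum_Ico_add' f n (m + 1) r
  rw [hshift]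
  have h1 : ∑ k ∈ Finset.Ico n (m + 1), f k + ∑ k ∈ Finset.Ico (m + 1) (m + r + 1), f k
      = ∑ k ∈ Finset.Ico n (m + r + 1), f k :=
    Finset.sum_Ico_consecutive f (by omega) (by omega)
  have h2 : ∑ k ∈ Finset.Ico n (n + r), f k + ∑ k ∈ Finset.Ico (n + r) (m + 1 + r), f k
      = ∑ k ∈ Finset.Ico n (m + 1 + r), f k :=
    Finset.sum_Ico_consecutive f (by omega) (by omega)
  have h3 : (m + 1 + r) = (m + r + 1) := by omega
  rw [h3] at h2
  linear_combination h1 - h2
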